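/- Let L be a finite set of lines in the plane, each colored red, green, or blue, with at least one line of each color, such that the arrangement is simple (no two lines of L are parallel and no three lines of L pass through a common point). Then there exist points p, q ∈ ℝ² such that the closed segment [p, q] intersects exactly one red line, exactly one green line, and exactly one blue line of L. -/

import Mathlib

namespace Stmt3Proof

def val (f : ℝ × ℝ) (x : ℝ) : ℝ := f.1 * x + f.2
noncomputable def rho (f g : ℝ × ℝ) : ℝ := (g.2 - f.2) / (f.1 - g.1)

lemma rho_comm (f g : ℝ × ℝ) : rho f g = rho g f := by
  unfold rho
  rcases eq_or_ne f.1 g.1 with h | h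
  · simp [h, sub_eq_zero_of_eq, sub_eq_zero.2 h.symm]
  · rw [div_eq_div_iff (sub_ne_zero.2 h) (sub_ne_zero.2 h.symm)]; ring

lemma val_eq_iff {f g : ℝ × ℝ} (h : f.1 ≠ g.1) {x : ℝ} :
    val f x = val g x ↔ x = rho f g := by
  unfold val rho
  rw [eq_div_iff (sub_ne_zero.2 h)]
  constructor <;> intro h' <;> nlinarith [h']

/-- sign persistence: if no root on [x,y], strict order persists -/
lemma persist {f g : ℝ × ℝ} {x y : ℝ} (hxy : x ≤ y)
    (h : ∀ z, x ≤ z → z ≤ y → val f z ≠ val g z)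
    (hlt : val f x < val g x) : val f y < val g y := by
  by_contra hc
  push_neg at hc
  rcases hc.lt_or_eq with hgy | hgy
  · have cont : ContinuousOn (fun z => val f z - val g z) (Set.Icc x y) := by
      apply Continuous.continuousOn
      unfold val
      continuity
    have hmem : (0:ℝ) ∈ Set.Icc (val f x - val g x) (val f y - val g y) := by
      constructor <;> simp <;> linarith
    obtain ⟨z, hz, hz2⟩ := intermediate_value_Icc hxy cont hmem
    exact h z hz.1 hz.2 (by simp at hz2; linarith)
  · exact h y hxy le_rfl hgy.symm

lemma persist_back {f g : ℝ × ℝ} {y x : ℝ} (hyx : y ≤ x)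
    (h : ∀ z, y ≤ z → z ≤ x → val f z ≠ val g z)
    (hlt : val f x < val g x) : val f y < val g y := by
  rcases lt_trichotomy (val f y) (val g y) with h1 | h1 | h1
  · exact h1
  · exact absurd h1 (h y le_rfl hyx)
  · exact absurd (persist hyx (fun z hz1 hz2 he => h z hz1 hz2 he.symm) h1)
      (not_lt.2 hlt.le)

/-- flip across the crossing -/
lemma flip {f g : ℝ × ℝ} (hfg : f.1 ≠ g.1) {x x' : ℝ}
    (hx : x < rho f g) (hx' : rho f g < x')
    (hlt : val f x < val g x) : val g x' < val f x' := by
  have key : ∀ z, val g z - val f z = (g.1 - f.1) * (z - rho f g) := by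
    intro z
    have : val f (rho f g) = val g (rho f g) := (val_eq_iff hfg).2 rfl
    unfold val at *; nlinarith [this]
  have h1 := key x
  have h2 := key x'
  nlinarith [h1, h2]

lemma pair_cases {u w g h : ℝ × ℝ} (huw : ({u, w} : Set (ℝ × ℝ)) = {g, h}) :
    (u = g ∧ w = h) ∨ (u = h ∧ w = g) := by
  rw [Set.pair_eq_pair_iff] at huw
  tauto

lemma pair_ne {u w g h : ℝ × ℝ} (H : ¬((u = g ∧ w = h) ∨ (u = h ∧ w = g))) :
    ({u, w} : Set (ℝ × ℝ)) ≠ {g, h} := fun e => H (pair_cases e)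

lemma pair_ne' {u w g h' : ℝ × ℝ} (h1 : u ≠ g ∨ w ≠ h') (h2 : u ≠ h' ∨ w ≠ g) :
    ({u, w} : Set (ℝ × ℝ)) ≠ {g, h'} := by
  intro e
  rcases pair_cases e with ⟨e1, e2⟩ | ⟨e1, e2⟩
  · rcases h1 with t | t
    · exact t e1
    · exact t e2
  · rcases h2 with t | t
    · exact t e1
    · exact t e2

lemma fin3_cases : ∀ c₁ c₂ c₃ d : Fin 3, c₁ ≠ c₂ → c₁ ≠ c₃ → c₂ ≠ c₃ →
    (d = c₁ ∨ d = c₂ ∨ d = c₃) := by decide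

section Defs

variable (F : Finset (ℝ × ℝ)) (col : ℝ × ℝ → Fin 3)

def CF (x : ℝ) : Prop := ∀ f ∈ F, ∀ g ∈ F, f ≠ g → val f x ≠ val g x

def Wit (x : ℝ) : Prop := CF F x ∧ ∃ f₁ ∈ F, ∃ f₂ ∈ F, ∃ f₃ ∈ F,
    col f₁ ≠ col f₂ ∧ col f₁ ≠ col f₃ ∧ col f₂ ≠ col f₃ ∧
    val f₁ x < val f₂ x ∧ val f₂ x < val f₃ x ∧
    ∀ g ∈ F, g ≠ f₁ → g ≠ f₂ → g ≠ f₃ → val g x < val f₁ x ∨ val f₃ x < val g x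

def J (B : Fin 3) (x : ℝ) : Prop := ∃ a ∈ F, ∃ a' ∈ F,
    col a ≠ B ∧ col a' ≠ B ∧ col a ≠ col a' ∧ val a x < val a' x ∧ x < rho a a' ∧
    (∃ z ∈ F, val a x < val z x ∧ val z x < val a' x) ∧
    (∀ z ∈ F, val a x < val z x → val z x < val a' x → col z = B)

noncomputable def crossSet : Finset ℝ :=
  ((F ×ˢ F).filter (fun p => p.1 ≠ p.2)).image (fun p => rho p.1 p.2)

noncomputable def NN (x : ℝ) : ℕ :=
  ((F ×ˢ F).filter (fun p => p.1 ≠ p.2 ∧ x < rho p.1 p.2)).card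

end Defs

lemma mem_crossSet {F : Finset (ℝ × ℝ)} {u w : ℝ × ℝ} (hu : u ∈ F) (hw : w ∈ F)
    (huw : u ≠ w) : rho u w ∈ crossSet F :=
  Finset.mem_image.2 ⟨(u, w), Finset.mem_filter.2 ⟨Finset.mem_product.2 ⟨hu, hw⟩, huw⟩, rfl⟩

lemma crossSet_spec {F : Finset (ℝ × ℝ)} {r : ℝ} (hr : r ∈ crossSet F) :
    ∃ u ∈ F, ∃ w ∈ F, u ≠ w ∧ r = rho u w := by
  obtain ⟨p, hp, hrp⟩ := Finset.mem_image.1 hr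
  obtain ⟨hmem, hne⟩ := Finset.mem_filter.1 hp
  obtain ⟨h1, h2⟩ := Finset.mem_product.1 hmem
  exact ⟨p.1, h1, p.2, h2, hne, hrp.symm⟩

section Step

variable {F : Finset (ℝ × ℝ)} {col : ℝ × ℝ → Fin 3} {B : Fin 3}

set_option maxHeartbeats 2000000 in
lemma step
    (Hslope : ∀ f ∈ F, ∀ g ∈ F, f ≠ g → f.1 ≠ g.1)
    (Hgen : ∀ f ∈ F, ∀ g ∈ F, ∀ f' ∈ F, ∀ g' ∈ F, f ≠ g → f' ≠ g' →
      rho f g = rho f' g' → ({f, g} : Set (ℝ × ℝ)) = {f', g'})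
    (x : ℝ) (hCF : CF F x) (hJ : J F col B x)
    (hnw : ∀ y, ¬ Wit F col y) :
    ∃ x', x < x' ∧ CF F x' ∧ J F col B x' ∧ NN F x' < NN F x := by
  obtain ⟨a, haF, a', ha'F, hcaB, hca'B, hcaa', hord, hrhoJ, ⟨z0, hz0F, hz0l, hz0r⟩, hblue⟩ := hJ
  have hane : a ≠ a' := fun e => hcaa' (by rw [e])
  obtain ⟨x₁, hx₁CS, hxx₁, hx₁min⟩ :
      ∃ x₁ ∈ crossSet F, x < x₁ ∧ ∀ r ∈ crossSet F, x < r → x₁ ≤ r := by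
    have hTne : (((crossSet F).filter (fun r => x < r)).Nonempty) :=
      ⟨rho a a', Finset.mem_filter.2 ⟨mem_crossSet haF ha'F hane, hrhoJ⟩⟩
    refine ⟨((crossSet F).filter (fun r => x < r)).min' hTne,
      (Finset.mem_filter.1 (Finset.min'_mem _ hTne)).1,
      (Finset.mem_filter.1 (Finset.min'_mem _ hTne)).2,
      fun r hr hxr => Finset.min'_le _ r (Finset.mem_filter.2 ⟨hr, hxr⟩)⟩
  obtain ⟨x', hx₁x', hgap⟩ : ∃ x', x₁ < x' ∧ ∀ r ∈ crossSet F, x₁ < r → x' < r := by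
    by_cases h2 : (((crossSet F).filter (fun r => x₁ < r)).Nonempty)
    · refine ⟨(x₁ + Finset.min' _ h2) / 2, ?_, ?_⟩
      · have := (Finset.mem_filter.1 (Finset.min'_mem _ h2)).2
        linarith
      · intro r hr hx₁r
        have h3 := Finset.min'_le _ r (Finset.mem_filter.2 ⟨hr, hx₁r⟩)
        have := (Finset.mem_filter.1 (Finset.min'_mem _ h2)).2
        linarith
    · exact ⟨x₁ + 1, by linarith, fun r hr hx₁r =>
        absurd ⟨r, Finset.mem_filter.2 ⟨hr, hx₁r⟩⟩ h2⟩
  have hxx' : x < x' := hxx₁.trans hx₁x'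
  have hkey : ∀ r ∈ crossSet F, x < r → r ≤ x' → r = x₁ := by
    intro r hr h1 h2
    rcases lt_or_ge x₁ r with h3 | h3
    · exact absurd h2 (not_le.2 (hgap r hr h3))
    · exact le_antisymm h3 (hx₁min r hr h1)
  obtain ⟨g, hgF, h, hhF, hgh, hx₁gh⟩ := crossSet_spec hx₁CS
  have huniq : ∀ u ∈ F, ∀ w ∈ F, u ≠ w → rho u w = x₁ → ({u, w} : Set (ℝ × ℝ)) = {g, h} :=
    fun u hu w hw huw he => Hgen u hu w hw g hgF h hhF huw hgh (by rw [he, hx₁gh])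
  have hCF' : CF F x' := by
    intro u hu w hw huw he
    have heq : x' = rho u w := (val_eq_iff (Hslope u hu w hw huw)).1 he
    have h5 : rho u w = x₁ :=
      hkey _ (mem_crossSet hu hw huw) (heq ▸ hxx') (le_of_eq heq.symm)
    rw [← heq] at h5
    linarith
  have hnoroot : ∀ u ∈ F, ∀ w ∈ F, u ≠ w → ({u, w} : Set (ℝ × ℝ)) ≠ {g, h} →
      ∀ z, x ≤ z → z ≤ x' → val u z ≠ val w z := by
    intro u hu w hw huw hne z hz1 hz2 he
    have hzr : z = rho u w := (val_eq_iff (Hslope u hu w hw huw)).1 he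
    rcases eq_or_lt_of_le hz1 with hzx | hzx
    · exact hCF u hu w hw huw (hzx ▸ he)
    · exact hne (huniq u hu w hw huw
        (hkey _ (mem_crossSet hu hw huw) (hzr ▸ hzx) (hzr ▸ hz2)))
  have tool : ∀ u ∈ F, ∀ w ∈ F, u ≠ w → ({u, w} : Set (ℝ × ℝ)) ≠ {g, h} →
      val u x < val w x → val u x' < val w x' :=
    fun u hu w hw huw hne hlt => persist hxx'.le (hnoroot u hu w hw huw hne) hlt
  have toolr : ∀ u ∈ F, ∀ w ∈ F, u ≠ w → ({u, w} : Set (ℝ × ℝ)) ≠ {g, h} →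
      val u x' < val w x' → val u x < val w x := by
    intro u hu w hw huw hne hlt
    rcases lt_trichotomy (val u x) (val w x) with h1 | h1 | h1
    · exact h1
    · exact absurd h1 (hCF u hu w hw huw)
    · have := tool w hw u hu huw.symm (by rw [Set.pair_comm]; exact hne) h1
      linarith
  have tool1 : ∀ u ∈ F, ∀ w ∈ F, u ≠ w → ({u, w} : Set (ℝ × ℝ)) ≠ {g, h} →
      val u x < val w x → val u x₁ < val w x₁ :=
    fun u hu w hw huw hne hlt => persist hxx₁.le
      (fun z h1 h2 => hnoroot u hu w hw huw hne z h1 (h2.trans hx₁x'.le)) hlt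
  have hNN : NN F x' < NN F x := by
    apply Finset.card_lt_card
    refine ⟨fun p hp => ?_, fun hsub => ?_⟩
    · obtain ⟨h1, h2⟩ := Finset.mem_filter.1 hp
      exact Finset.mem_filter.2 ⟨h1, h2.1, hxx'.trans h2.2⟩
    · have hmem : (g, h) ∈ (F ×ˢ F).filter (fun p => p.1 ≠ p.2 ∧ x < rho p.1 p.2) :=
        Finset.mem_filter.2 ⟨Finset.mem_product.2 ⟨hgF, hhF⟩, hgh, hx₁gh ▸ hxx₁⟩
      have h6 := (Finset.mem_filter.1 (hsub hmem)).2.2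
      rw [← hx₁gh] at h6
      linarith
  -- the ordering of the event pair must flip
  have fliptool : ∀ u ∈ F, ∀ w ∈ F, u ≠ w → ({u, w} : Set (ℝ × ℝ)) = {g, h} →
      val u x < val w x → val w x' < val u x' := by
    intro u hu w hw huw hpr hlt
    have hr : rho u w = x₁ := by
      rcases pair_cases hpr with ⟨e1, e2⟩ | ⟨e1, e2⟩
      · rw [e1, e2, hx₁gh]
      · rw [e1, e2, ← rho_comm, hx₁gh]
    exact flip (Hslope u hu w hw huw) (hr ▸ hxx₁) (hr ▸ hx₁x') hlt
  by_cases hA : ({a, a'} : Set (ℝ × ℝ)) = {g, h}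
  · -- impossible: the zone element z0 gets squeezed
    exfalso
    have hz0a : z0 ≠ a := fun e => by rw [e] at hz0l; linarith
    have hz0a' : z0 ≠ a' := fun e => by rw [e] at hz0r; linarith
    have hrhoaa' : rho a a' = x₁ := by
      rcases pair_cases hA with ⟨e1, e2⟩ | ⟨e1, e2⟩
      · rw [e1, e2, hx₁gh]
      · rw [e1, e2, ← rho_comm, hx₁gh]
    have he1 : val a x₁ = val a' x₁ := (val_eq_iff (Hslope a haF a' ha'F hane)).2 hrhoaa'.symm
    have hne1 : ({a, z0} : Set (ℝ × ℝ)) ≠ {g, h} := by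
      rw [← hA]; exact pair_ne' (Or.inr hz0a') (Or.inl hane)
    have hne2 : ({z0, a'} : Set (ℝ × ℝ)) ≠ {g, h} := by
      rw [← hA]; exact pair_ne' (Or.inl hz0a) (Or.inl hz0a')
    have q1 := tool1 a haF z0 hz0F (Ne.symm hz0a) hne1 hz0l
    have q2 := tool1 z0 hz0F a' ha'F hz0a' hne2 hz0r
    linarith
  · -- the event pair is not {a, a'}
    have hrho' : x' < rho a a' := by
      rcases lt_or_ge x' (rho a a') with h1 | h1
      · exact h1
      · exact absurd (huniq a haF a' ha'F hane
          (hkey _ (mem_crossSet haF ha'F hane) hrhoJ h1)) hA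
    have hz0a : z0 ≠ a := fun e => by rw [e] at hz0l; linarith
    have hz0a' : z0 ≠ a' := fun e => by rw [e] at hz0r; linarith
    by_cases haP : a = g ∨ a = h
    · -- the event is m crossing a
      obtain ⟨m, hmF, hmne, hpair, hrho1⟩ :
          ∃ m ∈ F, m ≠ a ∧ ({a, m} : Set (ℝ × ℝ)) = {g, h} ∧ rho a m = x₁ := by
        rcases haP with e | e
        · subst e; exact ⟨h, hhF, fun e2 => hgh e2.symm, rfl, hx₁gh.symm⟩
        · subst e; exact ⟨g, hgF, fun e2 => hgh e2, Set.pair_comm _ _, by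
            rw [← rho_comm, hx₁gh]⟩
      have hma' : m ≠ a' := fun e => hA (by rw [← hpair, e])
      rw [← hpair] at tool toolr tool1 fliptool huniq
      have heq1 : val a x₁ = val m x₁ :=
        (val_eq_iff (Hslope a haF m hmF (Ne.symm hmne))).2 hrho1.symm
      have pnAA' : ({a, a'} : Set (ℝ × ℝ)) ≠ {a, m} := pair_ne' (Or.inr (Ne.symm hma')) (Or.inl (Ne.symm hmne))
      have pnMA' : ({m, a'} : Set (ℝ × ℝ)) ≠ {a, m} := pair_ne' (Or.inl hmne) (Or.inr (Ne.symm hane))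
      have pnA'M : ({a', m} : Set (ℝ × ℝ)) ≠ {a, m} := pair_ne' (Or.inl (Ne.symm hane)) (Or.inr hmne)
      have wAA' : val a x' < val a' x' := tool a haF a' ha'F hane pnAA' hord
      rcases lt_trichotomy (val m x) (val a x) with hm1 | hm1 | hm1
      · -- m enters the zone from below
        have hadj : ∀ w ∈ F, w ≠ m → w ≠ a → ¬(val m x < val w x ∧ val w x < val a x) := by
          intro w hwF hwm hwa hcon
          have q1 := tool1 m hmF w hwF (Ne.symm hwm) (pair_ne' (Or.inl hmne) (Or.inr hwa)) hcon.1
          have q2 := tool1 w hwF a haF hwa (pair_ne' (Or.inl hwa) (Or.inl hwm)) hcon.2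
          linarith
        have hflip : val a x' < val m x' :=
          fliptool m hmF a haF hmne (Set.pair_comm _ _) hm1
        have wMA' : val m x' < val a' x' := tool m hmF a' ha'F hma' pnMA' (hm1.trans hord)
        by_cases hmB : col m = B
        · -- J with same pair, zone grows by m
          have hbl : ∀ z ∈ F, val a x' < val z x' → val z x' < val a' x' → col z = B := by
            intro z hzF hz1 hz2
            by_cases hzm : z = m
            · rw [hzm]; exact hmB
            · have hza : z ≠ a := fun e => by rw [e] at hz1; linarith
              have hza' : z ≠ a' := fun e => by rw [e] at hz2; linarith
              have q1 := toolr a haF z hzF (Ne.symm hza) (pair_ne' (Or.inr hzm) (Or.inl (Ne.symm hmne))) hz1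
              have q2 := toolr z hzF a' ha'F hza' (pair_ne' (Or.inl hza) (Or.inl hzm)) hz2
              exact hblue z hzF q1 q2
          exact ⟨x', hxx', hCF', ⟨a, haF, a', ha'F, hcaB, hca'B, hcaa', wAA', hrho',
            ⟨m, hmF, hflip, wMA'⟩, hbl⟩, hNN⟩
        · by_cases hmca : col m = col a
          · -- J with new pair (m, a')
            have hrma' : x' < rho m a' := by
              rcases lt_or_ge x' (rho m a') with h1 | h1
              · exact h1
              exfalso
              rcases lt_trichotomy x (rho m a') with h2 | h2 | h2
              · exact pnMA'
                  (huniq m hmF a' ha'F hma' (hkey _ (mem_crossSet hmF ha'F hma') h2 h1))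
              · exact hCF m hmF a' ha'F hma'
                  ((val_eq_iff (Hslope m hmF a' ha'F hma')).2 h2)
              · have he : val m (rho m a') = val a' (rho m a') :=
                  (val_eq_iff (Hslope m hmF a' ha'F hma')).2 rfl
                have q1 : val m (rho m a') < val a (rho m a') :=
                  persist_back h2.le (fun z hza hzb heq => by
                    have := (val_eq_iff (Hslope m hmF a haF hmne)).1 heq
                    rw [rho_comm m a, hrho1] at this; linarith) hm1
                have q2 : val a (rho m a') < val a' (rho m a') :=
                  persist_back h2.le (fun z hza hzb heq => by
                    have := (val_eq_iff (Hslope a haF a' ha'F hane)).1 heq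
                    linarith [hrho']) hord
                linarith
            have hz0m : z0 ≠ m := fun e => by rw [e] at hz0l; linarith
            have hcmB : col m ≠ B := hmB
            have hcma' : col m ≠ col a' := fun e => hcaa' (hmca ▸ e)
            have wMZ0 : val m x' < val z0 x' :=
              tool m hmF z0 hz0F (Ne.symm hz0m) (pair_ne' (Or.inl hmne) (Or.inr hz0a)) (hm1.trans hz0l)
            have wZ0A' : val z0 x' < val a' x' :=
              tool z0 hz0F a' ha'F hz0a' (pair_ne' (Or.inl hz0a) (Or.inl hz0m)) hz0r
            have hbl : ∀ z ∈ F, val m x' < val z x' → val z x' < val a' x' → col z = B := by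
              intro z hzF hz1 hz2
              have hzm : z ≠ m := fun e => by rw [e] at hz1; linarith
              have hza' : z ≠ a' := fun e => by rw [e] at hz2; linarith
              have hza : z ≠ a := fun e => by rw [e] at hz1; linarith [hflip]
              have q1 := toolr m hmF z hzF (Ne.symm hzm) (pair_ne' (Or.inl hmne) (Or.inr hza)) hz1
              have q2 := toolr z hzF a' ha'F hza' (pair_ne' (Or.inl hza) (Or.inl hzm)) hz2
              rcases lt_trichotomy (val z x) (val a x) with h3 | h3 | h3
              · exact absurd ⟨q1, h3⟩ (hadj z hzF hzm hza)
              · exact absurd h3 (hCF z hzF a haF hza)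
              · exact hblue z hzF h3 q2
            exact ⟨x', hxx', hCF', ⟨m, hmF, a', ha'F, hcmB, hca'B, hcma', wMA', hrma',
              ⟨z0, hz0F, wMZ0, wZ0A'⟩, hbl⟩, hNN⟩
          · -- col m = col a' : Witness at x, contradiction
            exfalso
            have hmca' : col m = col a' := by
              rcases fin3_cases (col a) (col a') B (col m) hcaa' hcaB hca'B with e | e | e
              · exact absurd e hmca
              · exact e
              · exact absurd e hmB
            obtain ⟨zs, hzsZ, hzsmin⟩ := (F.filter
              (fun z => val a x < val z x ∧ val z x < val a' x)).exists_min_image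
              (fun z => val z x) ⟨z0, Finset.mem_filter.2 ⟨hz0F, hz0l, hz0r⟩⟩
            obtain ⟨hzsF, hzsl, hzsr⟩ := Finset.mem_filter.1 hzsZ
            have hzsB : col zs = B := hblue zs hzsF hzsl hzsr
            have c1 : col m ≠ col a := hmca
            have c2 : col m ≠ col zs := by rw [hzsB]; exact hmB
            have c3 : col a ≠ col zs := by rw [hzsB]; exact hcaB
            have hout : ∀ w ∈ F, w ≠ m → w ≠ a → w ≠ zs →
                val w x < val m x ∨ val zs x < val w x := by
              intro w hwF hw1 hw2 hw3
              by_contra hcon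
              push_neg at hcon
              obtain ⟨hc1, hc2⟩ := hcon
              have hs1 : val m x < val w x := lt_of_le_of_ne hc1 (fun e =>
                hCF m hmF w hwF (Ne.symm hw1) e)
              have hs2 : val w x < val zs x := lt_of_le_of_ne hc2 (fun e =>
                hCF w hwF zs hzsF hw3 e)
              rcases lt_trichotomy (val w x) (val a x) with h3 | h3 | h3
              · exact hadj w hwF hw1 hw2 ⟨hs1, h3⟩
              · exact hCF w hwF a haF hw2 h3
              · have : val zs x ≤ val w x := hzsmin w (Finset.mem_filter.2
                  ⟨hwF, h3, hs2.trans hzsr⟩)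
                linarith
            exact hnw x ⟨hCF, m, hmF, a, haF, zs, hzsF, c1, c2, c3, hm1, hzsl, hout⟩
      · exact absurd hm1 (hCF m hmF a haF hmne)
      · rcases lt_trichotomy (val m x) (val a' x) with hm2 | hm2 | hm2
        · -- m is a zone element, exits downward
          have hmB : col m = B := hblue m hmF hm1 hm2
          by_cases hZs : ∀ z ∈ F, val a x < val z x → val z x < val a' x → z = m
          · -- zone = {m} : Witness at x
            exfalso
            have c1 : col a ≠ col m := by rw [hmB]; exact hcaB
            have c3 : col m ≠ col a' := by rw [hmB]; exact fun e => hca'B e.symm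
            have hout : ∀ w ∈ F, w ≠ a → w ≠ m → w ≠ a' →
                val w x < val a x ∨ val a' x < val w x := by
              intro w hwF hw1 hw2 hw3
              by_contra hcon
              push_neg at hcon
              obtain ⟨hc1, hc2⟩ := hcon
              have hs1 : val a x < val w x := lt_of_le_of_ne hc1 (fun e =>
                hCF a haF w hwF (Ne.symm hw1) e)
              have hs2 : val w x < val a' x := lt_of_le_of_ne hc2 (fun e =>
                hCF w hwF a' ha'F hw3 e)
              exact hw2 (hZs w hwF hs1 hs2)
            exact hnw x ⟨hCF, a, haF, m, hmF, a', ha'F, c1, hcaa', c3, hm1, hm2, hout⟩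
          · push_neg at hZs
            obtain ⟨z1, hz1F, hz1l, hz1r, hz1m⟩ := hZs
            have hz1a : z1 ≠ a := fun e => by rw [e] at hz1l; linarith
            have hz1a' : z1 ≠ a' := fun e => by rw [e] at hz1r; linarith
            have hflip : val m x' < val a x' :=
              fliptool a haF m hmF (Ne.symm hmne) rfl hm1
            have wAZ1 : val a x' < val z1 x' :=
              tool a haF z1 hz1F (Ne.symm hz1a) (pair_ne' (Or.inr hz1m) (Or.inl (Ne.symm hmne))) hz1l
            have wZ1A' : val z1 x' < val a' x' :=
              tool z1 hz1F a' ha'F hz1a' (pair_ne' (Or.inl hz1a) (Or.inl hz1m)) hz1r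
            have hbl : ∀ z ∈ F, val a x' < val z x' → val z x' < val a' x' → col z = B := by
              intro z hzF hz1 hz2
              have hzm : z ≠ m := fun e => by rw [e] at hz1; linarith
              have hza : z ≠ a := fun e => by rw [e] at hz1; linarith
              have hza' : z ≠ a' := fun e => by rw [e] at hz2; linarith
              have q1 := toolr a haF z hzF (Ne.symm hza) (pair_ne' (Or.inr hzm) (Or.inl (Ne.symm hmne))) hz1
              have q2 := toolr z hzF a' ha'F hza' (pair_ne' (Or.inl hza) (Or.inl hzm)) hz2
              exact hblue z hzF q1 q2
            exact ⟨x', hxx', hCF', ⟨a, haF, a', ha'F, hcaB, hca'B, hcaa', wAA', hrho',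
              ⟨z1, hz1F, wAZ1, wZ1A'⟩, hbl⟩, hNN⟩
        · exact absurd hm2 (hCF m hmF a' ha'F hma')
        · -- m above a' : impossible
          exfalso
          have q1 := tool1 a haF a' ha'F hane pnAA' hord
          have q2 := tool1 a' ha'F m hmF (Ne.symm hma') pnA'M hm2
          linarith
    · push_neg at haP
      obtain ⟨hag, hah⟩ := haP
      by_cases ha'P : a' = g ∨ a' = h
      · -- the event is m crossing a'
        obtain ⟨m, hmF, hmne, hpair, hrho1⟩ :
            ∃ m ∈ F, m ≠ a' ∧ ({a', m} : Set (ℝ × ℝ)) = {g, h} ∧ rho a' m = x₁ := by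
          rcases ha'P with e | e
          · subst e; exact ⟨h, hhF, fun e2 => hgh e2.symm, rfl, hx₁gh.symm⟩
          · subst e; exact ⟨g, hgF, fun e2 => hgh e2, Set.pair_comm _ _, by
              rw [← rho_comm, hx₁gh]⟩
        have hmna : m ≠ a := by
          rcases pair_cases hpair with ⟨e1, e2⟩ | ⟨e1, e2⟩
          · rw [e2]; exact fun e => hah e.symm
          · rw [e2]; exact fun e => hag e.symm
        rw [← hpair] at tool toolr tool1 fliptool huniq
        have heq1 : val a' x₁ = val m x₁ :=
          (val_eq_iff (Hslope a' ha'F m hmF (Ne.symm hmne))).2 hrho1.symm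
        have pnAA' : ({a, a'} : Set (ℝ × ℝ)) ≠ {a', m} :=
          pair_ne' (Or.inl hane) (Or.inl (Ne.symm hmna))
        have wAA' : val a x' < val a' x' := tool a haF a' ha'F hane pnAA' hord
        rcases lt_trichotomy (val m x) (val a' x) with hm1 | hm1 | hm1
        · rcases lt_trichotomy (val a x) (val m x) with hm2 | hm2 | hm2
          · -- m is a zone element, exits upward
            have hmB : col m = B := hblue m hmF hm2 hm1
            have hflip : val a' x' < val m x' :=
              fliptool m hmF a' ha'F hmne (Set.pair_comm _ _) hm1
            by_cases hZs : ∀ z ∈ F, val a x < val z x → val z x < val a' x → z = m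
            · -- zone = {m} : Witness at x
              exfalso
              have c1 : col a ≠ col m := by rw [hmB]; exact hcaB
              have c3 : col m ≠ col a' := by rw [hmB]; exact fun e => hca'B e.symm
              have hout : ∀ w ∈ F, w ≠ a → w ≠ m → w ≠ a' →
                  val w x < val a x ∨ val a' x < val w x := by
                intro w hwF hw1 hw2 hw3
                by_contra hcon
                push_neg at hcon
                obtain ⟨hc1, hc2⟩ := hcon
                have hs1 : val a x < val w x := lt_of_le_of_ne hc1 (fun e =>
                  hCF a haF w hwF (Ne.symm hw1) e)
                have hs2 : val w x < val a' x := lt_of_le_of_ne hc2 (fun e =>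
                  hCF w hwF a' ha'F hw3 e)
                exact hw2 (hZs w hwF hs1 hs2)
              exact hnw x ⟨hCF, a, haF, m, hmF, a', ha'F, c1, hcaa', c3, hm2, hm1, hout⟩
            · push_neg at hZs
              obtain ⟨z1, hz1F, hz1l, hz1r, hz1m⟩ := hZs
              have hz1a : z1 ≠ a := fun e => by rw [e] at hz1l; linarith
              have hz1a' : z1 ≠ a' := fun e => by rw [e] at hz1r; linarith
              have wAZ1 : val a x' < val z1 x' :=
                tool a haF z1 hz1F (Ne.symm hz1a) (pair_ne' (Or.inl hane)
                  (Or.inl (Ne.symm hmna))) hz1l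
              have wZ1A' : val z1 x' < val a' x' :=
                tool z1 hz1F a' ha'F hz1a' (pair_ne' (Or.inl hz1a') (Or.inl hz1m)) hz1r
              have hbl : ∀ z ∈ F, val a x' < val z x' → val z x' < val a' x' →
                  col z = B := by
                intro z hzF hz1 hz2
                have hzm : z ≠ m := fun e => by rw [e] at hz2; linarith
                have hza : z ≠ a := fun e => by rw [e] at hz1; linarith
                have hza' : z ≠ a' := fun e => by rw [e] at hz2; linarith
                have q1 := toolr a haF z hzF (Ne.symm hza) (pair_ne' (Or.inl hane)
                  (Or.inl (Ne.symm hmna))) hz1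
                have q2 := toolr z hzF a' ha'F hza' (pair_ne' (Or.inl hza')
                  (Or.inl hzm)) hz2
                exact hblue z hzF q1 q2
              exact ⟨x', hxx', hCF', ⟨a, haF, a', ha'F, hcaB, hca'B, hcaa', wAA', hrho',
                ⟨z1, hz1F, wAZ1, wZ1A'⟩, hbl⟩, hNN⟩
          · exact absurd hm2 (hCF a haF m hmF (Ne.symm hmna))
          · -- m below a : impossible
            exfalso
            have q1 := tool1 m hmF a haF hmna (pair_ne' (Or.inl hmne) (Or.inr hane)) hm2
            have q2 := tool1 a haF a' ha'F hane pnAA' hord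
            linarith
        · exact absurd hm1 (hCF m hmF a' ha'F hmne)
        · -- m enters the zone from above
          have hadj : ∀ w ∈ F, w ≠ a' → w ≠ m → ¬(val a' x < val w x ∧ val w x < val m x) := by
            intro w hwF hwa' hwm hcon
            have q1 := tool1 a' ha'F w hwF (Ne.symm hwa') (pair_ne' (Or.inr hwm)
              (Or.inr hwa')) hcon.1
            have q2 := tool1 w hwF m hmF hwm (pair_ne' (Or.inl hwa') (Or.inl hwm)) hcon.2
            linarith
          have hflip : val m x' < val a' x' :=
            fliptool a' ha'F m hmF (Ne.symm hmne) rfl hm1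
          have wAM : val a x' < val m x' :=
            tool a haF m hmF (Ne.symm hmna) (pair_ne' (Or.inl hane)
              (Or.inl (Ne.symm hmna))) (hord.trans hm1)
          by_cases hmB : col m = B
          · -- J with same pair, zone grows by m
            have hbl : ∀ z ∈ F, val a x' < val z x' → val z x' < val a' x' →
                col z = B := by
              intro z hzF hz1 hz2
              by_cases hzm : z = m
              · rw [hzm]; exact hmB
              · have hza : z ≠ a := fun e => by rw [e] at hz1; linarith
                have hza' : z ≠ a' := fun e => by rw [e] at hz2; linarith
                have q1 := toolr a haF z hzF (Ne.symm hza) (pair_ne' (Or.inl hane)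
                  (Or.inl (Ne.symm hmna))) hz1
                have q2 := toolr z hzF a' ha'F hza' (pair_ne' (Or.inl hza')
                  (Or.inl hzm)) hz2
                exact hblue z hzF q1 q2
            exact ⟨x', hxx', hCF', ⟨a, haF, a', ha'F, hcaB, hca'B, hcaa', wAA', hrho',
              ⟨m, hmF, wAM, hflip⟩, hbl⟩, hNN⟩
          · by_cases hmca' : col m = col a'
            · -- J with new pair (a, m)
              have hram : x' < rho a m := by
                rcases lt_or_ge x' (rho a m) with h1 | h1
                · exact h1
                exfalso
                rcases lt_trichotomy x (rho a m) with h2 | h2 | h2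
                · exact (pair_ne' (Or.inl hane) (Or.inl (Ne.symm hmna)))
                    (huniq a haF m hmF (Ne.symm hmna)
                      (hkey _ (mem_crossSet haF hmF (Ne.symm hmna)) h2 h1))
                · exact hCF a haF m hmF (Ne.symm hmna)
                    ((val_eq_iff (Hslope a haF m hmF (Ne.symm hmna))).2 h2)
                · have he : val a (rho a m) = val m (rho a m) :=
                    (val_eq_iff (Hslope a haF m hmF (Ne.symm hmna))).2 rfl
                  have q1 : val a' (rho a m) < val m (rho a m) :=
                    persist_back h2.le (fun z hza hzb heq => by
                      have := (val_eq_iff (Hslope a' ha'F m hmF (Ne.symm hmne))).1 heq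
                      rw [hrho1] at this; linarith) hm1
                  have q2 : val a (rho a m) < val a' (rho a m) :=
                    persist_back h2.le (fun z hza hzb heq => by
                      have := (val_eq_iff (Hslope a haF a' ha'F hane)).1 heq
                      linarith [hrho']) hord
                  linarith
              have hz0m : z0 ≠ m := fun e => by rw [e] at hz0r; linarith
              have hcma : col a ≠ col m := fun e => hcaa' (by rw [e, hmca'])
              have hcmB : col m ≠ B := hmB
              have wAZ0 : val a x' < val z0 x' :=
                tool a haF z0 hz0F (Ne.symm hz0a) (pair_ne' (Or.inl hane)
                  (Or.inl (Ne.symm hmna))) hz0l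
              have wZ0M : val z0 x' < val m x' :=
                tool z0 hz0F m hmF hz0m (pair_ne' (Or.inl hz0a') (Or.inl hz0m))
                  (hz0r.trans hm1)
              have hbl : ∀ z ∈ F, val a x' < val z x' → val z x' < val m x' →
                  col z = B := by
                intro z hzF hz1 hz2
                have hza : z ≠ a := fun e => by rw [e] at hz1; linarith
                have hzm : z ≠ m := fun e => by rw [e] at hz2; linarith
                have hza' : z ≠ a' := fun e => by rw [e] at hz2; linarith [hflip]
                have q1 := toolr a haF z hzF (Ne.symm hza) (pair_ne' (Or.inl hane)
                  (Or.inl (Ne.symm hmna))) hz1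
                have q2 := toolr z hzF m hmF hzm (pair_ne' (Or.inl hza')
                  (Or.inl hzm)) hz2
                rcases lt_trichotomy (val z x) (val a' x) with h3 | h3 | h3
                · exact hblue z hzF q1 h3
                · exact absurd h3 (hCF z hzF a' ha'F hza')
                · exact absurd ⟨h3, q2⟩ (hadj z hzF hza' hzm)
              exact ⟨x', hxx', hCF', ⟨a, haF, m, hmF, hcaB, hcmB, hcma, wAM, hram,
                ⟨z0, hz0F, wAZ0, wZ0M⟩, hbl⟩, hNN⟩
            · -- col m = col a : Witness at x, contradiction
              exfalso
              have hmca : col m = col a := by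
                rcases fin3_cases (col a) (col a') B (col m) hcaa' hcaB hca'B with e | e | e
                · exact e
                · exact absurd e hmca'
                · exact absurd e hmB
              obtain ⟨zs, hzsZ, hzsmax⟩ := (F.filter
                (fun z => val a x < val z x ∧ val z x < val a' x)).exists_max_image
                (fun z => val z x) ⟨z0, Finset.mem_filter.2 ⟨hz0F, hz0l, hz0r⟩⟩
              obtain ⟨hzsF, hzsl, hzsr⟩ := Finset.mem_filter.1 hzsZ
              have hzsB : col zs = B := hblue zs hzsF hzsl hzsr
              have c1 : col zs ≠ col a' := by rw [hzsB]; exact fun e => hca'B e.symm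
              have c2 : col zs ≠ col m := by rw [hzsB, hmca]; exact fun e => hcaB e.symm
              have c3 : col a' ≠ col m := by rw [hmca]; exact fun e => hcaa' e.symm
              have hout : ∀ w ∈ F, w ≠ zs → w ≠ a' → w ≠ m →
                  val w x < val zs x ∨ val m x < val w x := by
                intro w hwF hw1 hw2 hw3
                by_contra hcon
                push_neg at hcon
                obtain ⟨hc1, hc2⟩ := hcon
                have hs1 : val zs x < val w x := lt_of_le_of_ne hc1 (fun e =>
                  hCF zs hzsF w hwF (Ne.symm hw1) e)
                have hs2 : val w x < val m x := lt_of_le_of_ne hc2 (fun e =>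
                  hCF w hwF m hmF hw3 e)
                rcases lt_trichotomy (val w x) (val a' x) with h3 | h3 | h3
                · have : val w x ≤ val zs x := hzsmax w (Finset.mem_filter.2
                    ⟨hwF, hzsl.trans hs1, h3⟩)
                  linarith
                · exact hCF w hwF a' ha'F hw2 h3
                · exact hadj w hwF hw2 hw3 ⟨h3, hs2⟩
              exact hnw x ⟨hCF, zs, hzsF, a', ha'F, m, hmF, c1, c2, c3, hzsr, hm1, hout⟩
      · -- neither a nor a' is involved in the event
        push_neg at ha'P
        obtain ⟨ha'g, ha'h⟩ := ha'P
        have pnAA' : ({a, a'} : Set (ℝ × ℝ)) ≠ {g, h} := pair_ne' (Or.inl hag) (Or.inl hah)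
        have wAA' : val a x' < val a' x' := tool a haF a' ha'F hane pnAA' hord
        have wAZ0 : val a x' < val z0 x' :=
          tool a haF z0 hz0F (Ne.symm hz0a) (pair_ne' (Or.inl hag) (Or.inl hah)) hz0l
        have wZ0A' : val z0 x' < val a' x' :=
          tool z0 hz0F a' ha'F hz0a' (pair_ne' (Or.inr ha'h) (Or.inr ha'g)) hz0r
        have hbl : ∀ z ∈ F, val a x' < val z x' → val z x' < val a' x' → col z = B := by
          intro z hzF hz1 hz2
          have hza : z ≠ a := fun e => by rw [e] at hz1; linarith
          have hza' : z ≠ a' := fun e => by rw [e] at hz2; linarith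
          have q1 := toolr a haF z hzF (Ne.symm hza) (pair_ne' (Or.inl hag)
            (Or.inl hah)) hz1
          have q2 := toolr z hzF a' ha'F hza' (pair_ne' (Or.inr ha'h)
            (Or.inr ha'g)) hz2
          exact hblue z hzF q1 q2
        exact ⟨x', hxx', hCF', ⟨a, haF, a', ha'F, hcaB, hca'B, hcaa', wAA', hrho',
          ⟨z0, hz0F, wAZ0, wZ0A'⟩, hbl⟩, hNN⟩

lemma no_wit_down
    (Hslope : ∀ f ∈ F, ∀ g ∈ F, f ≠ g → f.1 ≠ g.1)
    (Hgen : ∀ f ∈ F, ∀ g ∈ F, ∀ f' ∈ F, ∀ g' ∈ F, f ≠ g → f' ≠ g' →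
      rho f g = rho f' g' → ({f, g} : Set (ℝ × ℝ)) = {f', g'})
    (hnw : ∀ y, ¬ Wit F col y) :
    ∀ n, ∀ x, CF F x → J F col B x → NN F x ≤ n → False := by
  intro n
  induction n with
  | zero =>
    intro x hCF hJ hn
    obtain ⟨x', _, _, _, hlt⟩ := step Hslope Hgen x hCF hJ hnw
    omega
  | succ n ihn =>
    intro x hCF hJ hn
    obtain ⟨x', _, hCF', hJ', hlt⟩ := step Hslope Hgen x hCF hJ hnw
    exact ihn x' hCF' hJ' (by omega)

lemma bad_case
    (Hslope : ∀ f ∈ F, ∀ g ∈ F, f ≠ g → f.1 ≠ g.1)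
    (Hgen : ∀ f ∈ F, ∀ g ∈ F, ∀ f' ∈ F, ∀ g' ∈ F, f ≠ g → f' ≠ g' →
      rho f g = rho f' g' → ({f, g} : Set (ℝ × ℝ)) = {f', g'})
    (x₀ : ℝ) (hCF : CF F x₀) (hJ : J F col B x₀) :
    ∃ y, Wit F col y := by
  by_contra hnw
  push_neg at hnw
  exact no_wit_down Hslope Hgen hnw (NN F x₀) x₀ hCF hJ le_rfl

end Step

section Flip

def flipF (f : ℝ × ℝ) : ℝ × ℝ := (-f.1, f.2)

lemma flipF_invol (f : ℝ × ℝ) : flipF (flipF f) = f := by simp [flipF]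

lemma flipF_inj : Function.Injective flipF :=
  Function.Involutive.injective flipF_invol

lemma val_flipF (f : ℝ × ℝ) (x : ℝ) : val (flipF f) (-x) = val f x := by
  unfold val flipF; ring

lemma rho_flipF (f g : ℝ × ℝ) : rho (flipF f) (flipF g) = -(rho f g) := by
  unfold rho flipF
  simp only
  rw [show -f.1 - -g.1 = -(f.1 - g.1) by ring, div_neg]

lemma slope_ne_of_val_eq {u w : ℝ × ℝ} (huw : u ≠ w) {z : ℝ}
    (he : val u z = val w z) : u.1 ≠ w.1 := by
  intro e
  apply huw
  have h2 : u.2 = w.2 := by unfold val at he; rw [e] at he; linarith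
  exact Prod.ext e h2

lemma CF_flip {F : Finset (ℝ × ℝ)} {x : ℝ} (h : CF F x) :
    CF (F.image flipF) (-x) := by
  intro u hu w hw huw he
  obtain ⟨u₀, hu₀, rfl⟩ := Finset.mem_image.1 hu
  obtain ⟨w₀, hw₀, rfl⟩ := Finset.mem_image.1 hw
  have hne : u₀ ≠ w₀ := fun e => huw (by rw [e])
  rw [val_flipF, val_flipF] at he
  exact h u₀ hu₀ w₀ hw₀ hne he

lemma Wit_flip {F : Finset (ℝ × ℝ)} {col : ℝ × ℝ → Fin 3} {y : ℝ}
    (h : Wit (F.image flipF) (fun f => col (flipF f)) y) : Wit F col (-y) := by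
  obtain ⟨hCF, f₁', hf₁, f₂', hf₂, f₃', hf₃, c12, c13, c23, o12, o23, hout⟩ := h
  obtain ⟨f₁, hf₁F, rfl⟩ := Finset.mem_image.1 hf₁
  obtain ⟨f₂, hf₂F, rfl⟩ := Finset.mem_image.1 hf₂
  obtain ⟨f₃, hf₃F, rfl⟩ := Finset.mem_image.1 hf₃
  simp only [flipF_invol] at c12 c13 c23
  have hy : ∀ f : ℝ × ℝ, val (flipF f) y = val f (-y) := by
    intro f; rw [← val_flipF f (-y), neg_neg]
  rw [hy, hy] at o12
  rw [hy, hy] at o23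
  refine ⟨?_, f₁, hf₁F, f₂, hf₂F, f₃, hf₃F, c12, c13, c23, o12, o23, ?_⟩
  · intro u hu w hw huw he
    have := hCF (flipF u) (Finset.mem_image_of_mem _ hu) (flipF w)
      (Finset.mem_image_of_mem _ hw) (fun e => huw (flipF_inj e))
    rw [hy, hy] at this
    exact this he
  · intro g hg hg1 hg2 hg3
    have := hout (flipF g) (Finset.mem_image_of_mem _ hg)
      (fun e => hg1 (flipF_inj e)) (fun e => hg2 (flipF_inj e))
      (fun e => hg3 (flipF_inj e))
    rw [hy, hy, hy] at this
    exact this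

lemma Hslope_flip {F : Finset (ℝ × ℝ)}
    (Hslope : ∀ f ∈ F, ∀ g ∈ F, f ≠ g → f.1 ≠ g.1) :
    ∀ f ∈ F.image flipF, ∀ g ∈ F.image flipF, f ≠ g → f.1 ≠ g.1 := by
  intro f hf g hg hfg
  obtain ⟨f₀, hf₀, rfl⟩ := Finset.mem_image.1 hf
  obtain ⟨g₀, hg₀, rfl⟩ := Finset.mem_image.1 hg
  have := Hslope f₀ hf₀ g₀ hg₀ (fun e => hfg (by rw [e]))
  simp only [flipF]
  exact fun e => this (by linarith [neg_injective e])

lemma Hgen_flip {F : Finset (ℝ × ℝ)}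
    (Hgen : ∀ f ∈ F, ∀ g ∈ F, ∀ f' ∈ F, ∀ g' ∈ F, f ≠ g → f' ≠ g' →
      rho f g = rho f' g' → ({f, g} : Set (ℝ × ℝ)) = {f', g'}) :
    ∀ f ∈ F.image flipF, ∀ g ∈ F.image flipF, ∀ f' ∈ F.image flipF,
      ∀ g' ∈ F.image flipF, f ≠ g → f' ≠ g' →
      rho f g = rho f' g' → ({f, g} : Set (ℝ × ℝ)) = {f', g'} := by
  intro f hf g hg f' hf' g' hg' hfg hfg' hr
  obtain ⟨f₀, hf₀, rfl⟩ := Finset.mem_image.1 hf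
  obtain ⟨g₀, hg₀, rfl⟩ := Finset.mem_image.1 hg
  obtain ⟨f₀', hf₀', rfl⟩ := Finset.mem_image.1 hf'
  obtain ⟨g₀', hg₀', rfl⟩ := Finset.mem_image.1 hg'
  rw [rho_flipF, rho_flipF, neg_inj] at hr
  have := Hgen f₀ hf₀ g₀ hg₀ f₀' hf₀' g₀' hg₀' (fun e => hfg (by rw [e]))
    (fun e => hfg' (by rw [e])) hr
  rcases pair_cases this with ⟨e1, e2⟩ | ⟨e1, e2⟩
  · rw [e1, e2]
  · rw [e1, e2, Set.pair_comm]

end Flip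

section Nudge

lemma CF_of_not_mem_crossSet {F : Finset (ℝ × ℝ)} {x : ℝ}
    (h : x ∉ crossSet F) : CF F x := by
  intro u hu w hw huw he
  have hs := slope_ne_of_val_eq huw he
  have : x = rho u w := (val_eq_iff hs).1 he
  exact h (this ▸ mem_crossSet hu hw huw)

/-- perturb a witness of a subfamily to a point avoiding all crossings of the big family -/
lemma nudge {F G : Finset (ℝ × ℝ)} {col : ℝ × ℝ → Fin 3} (hFG : F ⊆ G) {x₀ : ℝ}
    (hW : Wit F col x₀) : ∃ x, Wit F col x ∧ CF G x := by
  obtain ⟨hCF, f₁, hf₁, f₂, hf₂, f₃, hf₃, c12, c13, c23, o12, o23, hout⟩ := hW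
  obtain ⟨x, hx₀x, hxCS, hnr⟩ : ∃ x, x₀ < x ∧ x ∉ crossSet G ∧
      ∀ r ∈ crossSet G, x₀ < r → x < r := by
    by_cases h2 : (((crossSet G).filter (fun r => x₀ < r)).Nonempty)
    · obtain ⟨m, hmmem, hmle⟩ : ∃ m ∈ (crossSet G).filter (fun r => x₀ < r),
          ∀ r ∈ (crossSet G).filter (fun r => x₀ < r), m ≤ r :=
        ⟨_, Finset.min'_mem _ h2, fun r hr => Finset.min'_le _ r hr⟩
      obtain ⟨hmCS, hmgt⟩ := Finset.mem_filter.1 hmmem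
      refine ⟨(x₀ + m) / 2, by linarith, fun hc => ?_, fun r hr hx₀r => ?_⟩
      · have := hmle _ (Finset.mem_filter.2 ⟨hc, by linarith⟩)
        linarith
      · have := hmle r (Finset.mem_filter.2 ⟨hr, hx₀r⟩)
        linarith
    · refine ⟨x₀ + 1, by linarith, fun hc => ?_, fun r hr hx₀r => ?_⟩
      · exact h2 ⟨x₀ + 1, Finset.mem_filter.2 ⟨hc, by linarith⟩⟩
      · exact absurd ⟨r, Finset.mem_filter.2 ⟨hr, hx₀r⟩⟩ h2
  have hCFG : CF G x := CF_of_not_mem_crossSet hxCS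
  have hper : ∀ u ∈ F, ∀ w ∈ F, u ≠ w → val u x₀ < val w x₀ → val u x < val w x := by
    intro u hu w hw huw hlt
    apply persist hx₀x.le _ hlt
    intro z hz1 hz2 he
    have hs := slope_ne_of_val_eq huw he
    have hzr : z = rho u w := (val_eq_iff hs).1 he
    rcases eq_or_lt_of_le hz1 with hzx | hzx
    · exact hCF u hu w hw huw (hzx ▸ he)
    · have := hnr (rho u w) (mem_crossSet (hFG hu) (hFG hw) huw) (hzr ▸ hzx)
      linarith [hzr ▸ hz2]
  have d12 : f₁ ≠ f₂ := fun e => c12 (by rw [e])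
  have d13 : f₁ ≠ f₃ := fun e => c13 (by rw [e])
  have d23 : f₂ ≠ f₃ := fun e => c23 (by rw [e])
  refine ⟨x, ⟨fun u hu w hw huw => hCFG u (hFG hu) w (hFG hw) huw,
    f₁, hf₁, f₂, hf₂, f₃, hf₃, c12, c13, c23,
    hper f₁ hf₁ f₂ hf₂ d12 o12, hper f₂ hf₂ f₃ hf₃ d23 o23, ?_⟩, hCFG⟩
  intro g hg hg1 hg2 hg3
  rcases hout g hg hg1 hg2 hg3 with hlt | hlt
  · exact Or.inl (hper g hg f₁ hf₁ hg1 hlt)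
  · exact Or.inr (hper f₃ hf₃ g hg (Ne.symm hg3) hlt)

end Nudge

section Base

lemma wit_of_univ3 {F : Finset (ℝ × ℝ)} {col : ℝ × ℝ → Fin 3} {x : ℝ}
    (hCF : CF F x) (f0 f1 f2 : ℝ × ℝ) (h0 : f0 ∈ F) (h1 : f1 ∈ F) (h2 : f2 ∈ F)
    (c01 : col f0 ≠ col f1) (c02 : col f0 ≠ col f2) (c12 : col f1 ≠ col f2)
    (hall : ∀ g ∈ F, g = f0 ∨ g = f1 ∨ g = f2) : Wit F col x := by
  have d01 : f0 ≠ f1 := fun e => c01 (by rw [e])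
  have d02 : f0 ≠ f2 := fun e => c02 (by rw [e])
  have d12 : f1 ≠ f2 := fun e => c12 (by rw [e])
  have hout : ∀ a b c : ℝ × ℝ, ({a, b, c} : Set (ℝ × ℝ)) = {f0, f1, f2} →
      ∀ g ∈ F, g ≠ a → g ≠ b → g ≠ c → val g x < val a x ∨ val c x < val g x := by
    intro a b c he g hg hga hgb hgc
    exfalso
    have : g ∈ ({f0, f1, f2} : Set (ℝ × ℝ)) := by
      rcases hall g hg with e | e | e <;> simp [e]
    rw [← he] at this
    rcases this with e | e | e
    · exact hga e
    · exact hgb e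
    · exact hgc e
  rcases lt_trichotomy (val f0 x) (val f1 x) with t01 | t01 | t01
  · rcases lt_trichotomy (val f1 x) (val f2 x) with t12 | t12 | t12
    · exact ⟨hCF, f0, h0, f1, h1, f2, h2, c01, c02, c12, t01, t12,
        hout f0 f1 f2 rfl⟩
    · exact absurd t12 (hCF f1 h1 f2 h2 d12)
    · rcases lt_trichotomy (val f0 x) (val f2 x) with t02 | t02 | t02
      · exact ⟨hCF, f0, h0, f2, h2, f1, h1, c02, c01, fun e => c12 e.symm, t02, t12,
          hout f0 f2 f1 (by ext p; simp only [Set.mem_insert_iff, Set.mem_singleton_iff]; tauto)⟩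
      · exact absurd t02 (hCF f0 h0 f2 h2 d02)
      · exact ⟨hCF, f2, h2, f0, h0, f1, h1, fun e => c02 e.symm, fun e => c12 e.symm,
          c01, t02, t01, hout f2 f0 f1 (by ext p; simp only [Set.mem_insert_iff, Set.mem_singleton_iff]; tauto)⟩
  · exact absurd t01 (hCF f0 h0 f1 h1 d01)
  · rcases lt_trichotomy (val f0 x) (val f2 x) with t02 | t02 | t02
    · exact ⟨hCF, f1, h1, f0, h0, f2, h2, fun e => c01 e.symm, c12, c02, t01, t02,
        hout f1 f0 f2 (by ext p; simp only [Set.mem_insert_iff, Set.mem_singleton_iff]; tauto)⟩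
    · exact absurd t02 (hCF f0 h0 f2 h2 d02)
    · rcases lt_trichotomy (val f1 x) (val f2 x) with t12 | t12 | t12
      · exact ⟨hCF, f1, h1, f2, h2, f0, h0, c12, fun e => c01 e.symm,
          fun e => c02 e.symm, t12, t02, hout f1 f2 f0 (by ext p; simp only [Set.mem_insert_iff, Set.mem_singleton_iff]; tauto)⟩
      · exact absurd t12 (hCF f1 h1 f2 h2 d12)
      · exact ⟨hCF, f2, h2, f1, h1, f0, h0, fun e => c12 e.symm, fun e => c02 e.symm,
          fun e => c01 e.symm, t12, t01, hout f2 f1 f0 (by ext p; simp only [Set.mem_insert_iff, Set.mem_singleton_iff]; tauto)⟩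

end Base

theorem core : ∀ n (F : Finset (ℝ × ℝ)) (col : ℝ × ℝ → Fin 3), F.card = n →
    3 ≤ F.card →
    (∀ f ∈ F, ∀ g ∈ F, f ≠ g → f.1 ≠ g.1) →
    (∀ f ∈ F, ∀ g ∈ F, ∀ f' ∈ F, ∀ g' ∈ F, f ≠ g → f' ≠ g' →
      rho f g = rho f' g' → ({f, g} : Set (ℝ × ℝ)) = {f', g'}) →
    (∀ i : Fin 3, ∃ f ∈ F, col f = i) → ∃ x, Wit F col x := by
  intro n
  induction n using Nat.strong_induction_on with
  | _ n ih =>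
    intro F col hcard hcard3 Hslope Hgen Hcol
    obtain ⟨r0, hr0, hcr0⟩ := Hcol 0
    obtain ⟨r1, hr1, hcr1⟩ := Hcol 1
    obtain ⟨r2, hr2, hcr2⟩ := Hcol 2
    have d01 : r0 ≠ r1 := fun e => by rw [e, hcr1] at hcr0; exact absurd hcr0 (by decide)
    have d02 : r0 ≠ r2 := fun e => by rw [e, hcr2] at hcr0; exact absurd hcr0 (by decide)
    have d12 : r1 ≠ r2 := fun e => by rw [e, hcr2] at hcr1; exact absurd hcr1 (by decide)
    have hcard123 : ({r0, r1, r2} : Finset (ℝ × ℝ)).card = 3 :=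
      Finset.card_eq_three.2 ⟨r0, r1, r2, d01, d02, d12, rfl⟩
    rcases eq_or_lt_of_le hcard3 with h3 | h4
    · -- base case : exactly three functions
      have hsub : ({r0, r1, r2} : Finset (ℝ × ℝ)) ⊆ F := by
        intro t ht
        rcases Finset.mem_insert.1 ht with e | ht2
        · exact e ▸ hr0
        rcases Finset.mem_insert.1 ht2 with e | ht3
        · exact e ▸ hr1
        · exact (Finset.mem_singleton.1 ht3) ▸ hr2
      have hFeq : F = {r0, r1, r2} :=
        (Finset.eq_of_subset_of_card_le hsub (by omega)).symm ▸ rfl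
      have hall : ∀ g ∈ F, g = r0 ∨ g = r1 ∨ g = r2 := by
        intro g hg
        rw [hFeq] at hg
        simpa using hg
      obtain ⟨x, hx⟩ := Infinite.exists_notMem_finset (crossSet F)
      have hCF : CF F x := CF_of_not_mem_crossSet hx
      exact ⟨x, wit_of_univ3 hCF r0 r1 r2 hr0 hr1 hr2
        (by rw [hcr0, hcr1]; decide) (by rw [hcr0, hcr2]; decide)
        (by rw [hcr1, hcr2]; decide) hall⟩
    · -- inductive step
      have hnsub : ¬ F ⊆ ({r0, r1, r2} : Finset (ℝ × ℝ)) := by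
        intro hsub
        have := Finset.card_le_card hsub
        rw [hcard123] at this
        omega
      obtain ⟨b, hbF, hbn⟩ := Finset.not_subset.1 hnsub
      have hb0 : b ≠ r0 := fun e => hbn (by rw [e]; exact Finset.mem_insert_self _ _)
      have hb1 : b ≠ r1 := fun e => hbn (by rw [e]; simp)
      have hb2 : b ≠ r2 := fun e => hbn (by rw [e]; simp)
      have hsubF : F.erase b ⊆ F := Finset.erase_subset _ _
      have hcard' : (F.erase b).card = n - 1 := by
        rw [Finset.card_erase_of_mem hbF, hcard]
      have hcard'3 : 3 ≤ (F.erase b).card := by omega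
      have Hslope' : ∀ f ∈ F.erase b, ∀ g ∈ F.erase b, f ≠ g → f.1 ≠ g.1 :=
        fun f hf g hg => Hslope f (hsubF hf) g (hsubF hg)
      have Hgen' : ∀ f ∈ F.erase b, ∀ g ∈ F.erase b, ∀ f' ∈ F.erase b,
          ∀ g' ∈ F.erase b, f ≠ g → f' ≠ g' →
          rho f g = rho f' g' → ({f, g} : Set (ℝ × ℝ)) = {f', g'} :=
        fun f hf g hg f' hf' g' hg' => Hgen f (hsubF hf) g (hsubF hg) f' (hsubF hf')
          g' (hsubF hg')
      have Hcol' : ∀ i : Fin 3, ∃ f ∈ F.erase b, col f = i := by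
        intro i
        fin_cases i
        · exact ⟨r0, Finset.mem_erase.2 ⟨Ne.symm hb0, hr0⟩, hcr0⟩
        · exact ⟨r1, Finset.mem_erase.2 ⟨Ne.symm hb1, hr1⟩, hcr1⟩
        · exact ⟨r2, Finset.mem_erase.2 ⟨Ne.symm hb2, hr2⟩, hcr2⟩
      obtain ⟨x₀, hW0⟩ := ih (n - 1) (by omega) (F.erase b) col hcard' hcard'3
        Hslope' Hgen' Hcol'
      obtain ⟨x, hW, hCFF⟩ := nudge hsubF hW0
      obtain ⟨hCF', f₁, hf₁, f₂, hf₂, f₃, hf₃, c12, c13, c23, o12, o23, hout'⟩ := hW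
      have hf₁F : f₁ ∈ F := hsubF hf₁
      have hf₂F : f₂ ∈ F := hsubF hf₂
      have hf₃F : f₃ ∈ F := hsubF hf₃
      have hbf₁ : f₁ ≠ b := (Finset.mem_erase.1 hf₁).1
      have hbf₂ : f₂ ≠ b := (Finset.mem_erase.1 hf₂).1
      have hbf₃ : f₃ ≠ b := (Finset.mem_erase.1 hf₃).1
      have d13 : f₁ ≠ f₃ := fun e => c13 (by rw [e])
      have houtF : ∀ g ∈ F, g ≠ b → g ≠ f₁ → g ≠ f₂ → g ≠ f₃ →
          val g x < val f₁ x ∨ val f₃ x < val g x :=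
        fun g hg hgb => hout' g (Finset.mem_erase.2 ⟨hgb, hg⟩)
      rcases lt_trichotomy (val b x) (val f₁ x) with hb1' | hb1' | hb1'
      · -- b below the triple : witness for F
        refine ⟨x, hCFF, f₁, hf₁F, f₂, hf₂F, f₃, hf₃F, c12, c13, c23, o12, o23, ?_⟩
        intro g hg hg1 hg2 hg3
        by_cases hgb : g = b
        · exact Or.inl (by rw [hgb]; exact hb1')
        · exact houtF g hg hgb hg1 hg2 hg3
      · exact absurd hb1' (hCFF b hbF f₁ hf₁F (Ne.symm hbf₁))
      · rcases lt_trichotomy (val b x) (val f₃ x) with hb3' | hb3' | hb3'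
        · -- b strictly inside (f₁, f₃)
          by_cases hbc2 : col b = col f₂
          · -- the bad case : use the invariant machinery
            have hbl : ∀ z ∈ F, val f₁ x < val z x → val z x < val f₃ x →
                col z = col f₂ := by
              intro z hz hz1 hz3
              by_cases hzb : z = b
              · rw [hzb]; exact hbc2
              by_cases hz2 : z = f₂
              · rw [hz2]
              · have hzf₁ : z ≠ f₁ := fun e => by rw [e] at hz1; linarith
                have hzf₃ : z ≠ f₃ := fun e => by rw [e] at hz3; linarith
                rcases houtF z hz hzb hzf₁ hz2 hzf₃ with hl | hl <;> linarith
            have hJcolor1 : col f₁ ≠ col f₂ := c12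
            have hJcolor3 : col f₃ ≠ col f₂ := fun e => c23 e.symm
            rcases lt_trichotomy x (rho f₁ f₃) with hr | hr | hr
            · exact bad_case Hslope Hgen x hCFF ⟨f₁, hf₁F, f₃, hf₃F, hJcolor1,
                hJcolor3, c13, o12.trans o23, hr, ⟨f₂, hf₂F, o12, o23⟩, hbl⟩
            · exact absurd ((val_eq_iff (Hslope f₁ hf₁F f₃ hf₃F d13)).2 hr)
                (hCFF f₁ hf₁F f₃ hf₃F d13)
            · -- the pair already crossed : flip the picture
              have hv : ∀ f : ℝ × ℝ, val (flipF f) (-x) = val f x := fun f => val_flipF f x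
              have hJ' : J (F.image flipF) (fun f => col (flipF f)) (col f₂) (-x) := by
                refine ⟨flipF f₁, Finset.mem_image_of_mem _ hf₁F, flipF f₃,
                  Finset.mem_image_of_mem _ hf₃F, ?_, ?_, ?_, ?_, ?_,
                  ⟨flipF f₂, Finset.mem_image_of_mem _ hf₂F, ?_, ?_⟩, ?_⟩
                · show col (flipF (flipF f₁)) ≠ col f₂
                  rw [flipF_invol]; exact hJcolor1
                · show col (flipF (flipF f₃)) ≠ col f₂
                  rw [flipF_invol]; exact hJcolor3
                · show col (flipF (flipF f₁)) ≠ col (flipF (flipF f₃))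
                  rw [flipF_invol, flipF_invol]; exact c13
                · rw [hv, hv]; exact o12.trans o23
                · rw [rho_flipF]; linarith
                · rw [hv, hv]; exact o12
                · rw [hv, hv]; exact o23
                · intro z hz hz1 hz2
                  obtain ⟨z₀, hz₀, rfl⟩ := Finset.mem_image.1 hz
                  rw [hv, hv] at hz1
                  rw [hv, hv] at hz2
                  show col (flipF (flipF z₀)) = col f₂
                  rw [flipF_invol]
                  exact hbl z₀ hz₀ hz1 hz2
              obtain ⟨y, hy⟩ := bad_case (Hslope_flip Hslope) (Hgen_flip Hgen)
                (-x) (CF_flip hCFF) hJ'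
              exact ⟨-y, Wit_flip hy⟩
          · rcases fin3_cases (col f₁) (col f₂) (col f₃) (col b) c12 c13 c23
              with hbc | hbc | hbc
            · -- col b = col f₁
              rcases lt_trichotomy (val b x) (val f₂ x) with hb2' | hb2' | hb2'
              · refine ⟨x, hCFF, b, hbF, f₂, hf₂F, f₃, hf₃F,
                  by rw [hbc]; exact c12, by rw [hbc]; exact c13, c23, hb2', o23, ?_⟩
                intro g hg hg1 hg2 hg3
                by_cases hgf₁ : g = f₁
                · exact Or.inl (by rw [hgf₁]; exact hb1')
                · rcases houtF g hg hg1 hgf₁ hg2 hg3 with hl | hl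
                  · exact Or.inl (by linarith)
                  · exact Or.inr hl
              · exact absurd hb2' (hCFF b hbF f₂ hf₂F (Ne.symm hbf₂))
              · refine ⟨x, hCFF, f₂, hf₂F, b, hbF, f₃, hf₃F,
                  by rw [hbc]; exact fun e => c12 e.symm, c23, by rw [hbc]; exact c13,
                  hb2', hb3', ?_⟩
                intro g hg hg1 hg2 hg3
                by_cases hgf₁ : g = f₁
                · exact Or.inl (by rw [hgf₁]; exact o12)
                · rcases houtF g hg hg2 hgf₁ hg1 hg3 with hl | hl
                  · exact Or.inl (by linarith)
                  · exact Or.inr hl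
            · exact absurd hbc hbc2
            · -- col b = col f₃
              rcases lt_trichotomy (val b x) (val f₂ x) with hb2' | hb2' | hb2'
              · refine ⟨x, hCFF, f₁, hf₁F, b, hbF, f₂, hf₂F,
                  by rw [hbc]; exact c13, c12, by rw [hbc]; exact fun e => c23 e.symm,
                  hb1', hb2', ?_⟩
                intro g hg hg1 hg2 hg3
                by_cases hgf₃ : g = f₃
                · exact Or.inr (by rw [hgf₃]; exact o23)
                · rcases houtF g hg hg2 hg1 hg3 hgf₃ with hl | hl
                  · exact Or.inl hl
                  · exact Or.inr (by linarith)
              · exact absurd hb2' (hCFF b hbF f₂ hf₂F (Ne.symm hbf₂))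
              · refine ⟨x, hCFF, f₁, hf₁F, f₂, hf₂F, b, hbF,
                  c12, by rw [hbc]; exact c13, by rw [hbc]; exact c23,
                  o12, hb2', ?_⟩
                intro g hg hg1 hg2 hg3
                by_cases hgf₃ : g = f₃
                · exact Or.inr (by rw [hgf₃]; exact hb3')
                · rcases houtF g hg hg3 hg1 hg2 hgf₃ with hl | hl
                  · exact Or.inl hl
                  · exact Or.inr (by linarith)
        · exact absurd hb3' (hCFF b hbF f₃ hf₃F (Ne.symm hbf₃))
        · -- b above the triple : witness for F
          refine ⟨x, hCFF, f₁, hf₁F, f₂, hf₂F, f₃, hf₃F, c12, c13, c23, o12, o23, ?_⟩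
          intro g hg hg1 hg2 hg3
          by_cases hgb : g = b
          · exact Or.inr (by rw [hgb]; exact hb3')
          · exact houtF g hg hgb hg1 hg2 hg3

section Geometry

/-- sweep coordinates -/
def Xc (t : ℝ) (p : ℝ × ℝ) : ℝ := p.1 + t * p.2
def Yc (t : ℝ) (p : ℝ × ℝ) : ℝ := -t * p.1 + p.2
noncomputable def invC (t ξ η : ℝ) : ℝ × ℝ :=
  ((ξ - t * η) / (1 + t ^ 2), (t * ξ + η) / (1 + t ^ 2))

lemma one_add_sq_ne (t : ℝ) : 1 + t ^ 2 ≠ 0 := by positivity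

lemma Xc_invC (t ξ η : ℝ) : Xc t (invC t ξ η) = ξ := by
  unfold Xc invC
  field_simp
  ring

lemma Yc_invC (t ξ η : ℝ) : Yc t (invC t ξ η) = η := by
  unfold Yc invC
  field_simp
  ring

lemma invC_XY (t : ℝ) (p : ℝ × ℝ) : invC t (Xc t p) (Yc t p) = p := by
  unfold Xc Yc invC
  have h := one_add_sq_ne t
  ext
  · simp only
    field_simp
    ring
  · simp only
    field_simp
    ring

lemma XY_inj {t : ℝ} {p q : ℝ × ℝ} (hx : Xc t p = Xc t q) (hy : Yc t p = Yc t q) :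
    p = q := by
  rw [← invC_XY t p, hx, hy, invC_XY]

lemma Xc_comb (t a b : ℝ) (p q : ℝ × ℝ) :
    Xc t (a • p + b • q) = a * Xc t p + b * Xc t q := by
  unfold Xc
  simp only [Prod.fst_add, Prod.smul_fst, Prod.snd_add, Prod.smul_snd, smul_eq_mul]
  ring

lemma Yc_comb (t a b : ℝ) (p q : ℝ × ℝ) :
    Yc t (a • p + b • q) = a * Yc t p + b * Yc t q := by
  unfold Yc
  simp only [Prod.fst_add, Prod.smul_fst, Prod.snd_add, Prod.smul_snd, smul_eq_mul]
  ring

lemma invC_comb (t a b ξ η₁ η₂ : ℝ) (hab : a + b = 1) :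
    a • invC t ξ η₁ + b • invC t ξ η₂ = invC t ξ (a * η₁ + b * η₂) := by
  apply XY_inj (t := t)
  · rw [Xc_comb, Xc_invC, Xc_invC, Xc_invC]; linear_combination ξ * hab
  · rw [Yc_comb, Yc_invC, Yc_invC, Yc_invC]

lemma mem_segment_invC {t ξ ylo yhi η : ℝ} (h1 : ylo ≤ η) (h2 : η ≤ yhi)
    (hlh : ylo < yhi) :
    invC t ξ η ∈ segment ℝ (invC t ξ ylo) (invC t ξ yhi) := by
  have h0 : yhi - ylo ≠ 0 := by linarith
  have hab : (yhi - η) / (yhi - ylo) + (η - ylo) / (yhi - ylo) = 1 := by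
    field_simp
    ring
  refine ⟨(yhi - η) / (yhi - ylo), (η - ylo) / (yhi - ylo),
    div_nonneg (by linarith) (by linarith), div_nonneg (by linarith) (by linarith),
    hab, ?_⟩
  rw [invC_comb _ _ _ _ _ _ hab]
  congr 1
  field_simp
  ring

lemma segment_char {t ξ ylo yhi : ℝ} {z : ℝ × ℝ}
    (hz : z ∈ segment ℝ (invC t ξ ylo) (invC t ξ yhi)) :
    Xc t z = ξ ∧ ylo ⊓ yhi ≤ Yc t z ∧ Yc t z ≤ ylo ⊔ yhi := by
  obtain ⟨a, b, ha, hb, hab, rfl⟩ := hz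
  rw [Xc_comb, Yc_comb, Xc_invC, Xc_invC, Yc_invC, Yc_invC]
  refine ⟨by linear_combination ξ * hab, ?_, ?_⟩
  · have h1 : ylo ⊓ yhi ≤ ylo := inf_le_left
    have h2 : ylo ⊓ yhi ≤ yhi := inf_le_right
    have h3 := mul_nonneg ha (sub_nonneg.2 h1)
    have h4 := mul_nonneg hb (sub_nonneg.2 h2)
    have h5 : a * (ylo ⊓ yhi) + b * (ylo ⊓ yhi) = ylo ⊓ yhi := by
      linear_combination (ylo ⊓ yhi) * hab
    nlinarith [h3, h4, h5]
  · have h1 : ylo ≤ ylo ⊔ yhi := le_sup_left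
    have h2 : yhi ≤ ylo ⊔ yhi := le_sup_right
    have h3 := mul_nonneg ha (sub_nonneg.2 h1)
    have h4 := mul_nonneg hb (sub_nonneg.2 h2)
    have h5 : a * (ylo ⊔ yhi) + b * (ylo ⊔ yhi) = ylo ⊔ yhi := by
      linear_combination (ylo ⊔ yhi) * hab
    nlinarith [h3, h4, h5]

end Geometry

end Stmt3Proof

open Stmt3Proof

/-- **A segment crossing exactly one line of each color.**
For every simple arrangement of lines colored with colors `Fin 3`
(0 = red, 1 = green, 2 = blue), each color appearing at least once, there is a
closed segment `[p, q]` meeting exactly one line of each color. -/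
theorem stmt_3
    (L : Finset (Set (ℝ × ℝ)))
    (color : Set (ℝ × ℝ) → Fin 3)
    (hline : ∀ ℓ ∈ L, ∃ a b c : ℝ, (a, b) ≠ (0, 0) ∧
      ℓ = {p : ℝ × ℝ | a * p.1 + b * p.2 = c})
    (hcolors : ∀ i : Fin 3, ∃ ℓ ∈ L, color ℓ = i)
    (hnotpar : ∀ ℓ₁ ∈ L, ∀ ℓ₂ ∈ L, ℓ₁ ≠ ℓ₂ → (ℓ₁ ∩ ℓ₂).Nonempty)
    (hsimple : ∀ p : ℝ × ℝ, ∀ ℓ₁ ∈ L, ∀ ℓ₂ ∈ L, ∀ ℓ₃ ∈ L,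
      p ∈ ℓ₁ → p ∈ ℓ₂ → p ∈ ℓ₃ → ℓ₁ = ℓ₂ ∨ ℓ₁ = ℓ₃ ∨ ℓ₂ = ℓ₃) :
    ∃ p q : ℝ × ℝ, ∀ i : Fin 3,
      ∃! ℓ : Set (ℝ × ℝ), ℓ ∈ L ∧ color ℓ = i ∧ (segment ℝ p q ∩ ℓ).Nonempty := by
  classical
  choose! A B C hnz heq using hline
  choose! V hV using hnotpar
  set VS : Finset (ℝ × ℝ) :=
    ((L ×ˢ L).filter (fun q => q.1 ≠ q.2)).image (fun q => V q.1 q.2) with hVS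
  obtain ⟨t, ht⟩ := Infinite.exists_notMem_finset
    ((L.image (fun ℓ => B ℓ / A ℓ)) ∪
      ((VS ×ˢ VS).image (fun q => (q.2.1 - q.1.1) / (q.1.2 - q.2.2))))
  have htL : ∀ ℓ ∈ L, B ℓ - t * A ℓ ≠ 0 := by
    intro ℓ hℓ he
    by_cases hA : A ℓ = 0
    · have hB : B ℓ = 0 := by rw [hA] at he; linarith
      exact hnz ℓ hℓ (by rw [hA, hB])
    · refine ht (Finset.mem_union_left _ (Finset.mem_image.2 ⟨ℓ, hℓ, ?_⟩))
      rw [div_eq_iff hA]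
      linarith
  have htV : ∀ v ∈ VS, ∀ w ∈ VS, v ≠ w → Xc t v ≠ Xc t w := by
    intro v hv w hw hvw he
    unfold Xc at he
    by_cases h2 : v.2 = w.2
    · refine hvw (Prod.ext ?_ h2)
      rw [h2] at he
      linarith
    · refine ht (Finset.mem_union_right _ (Finset.mem_image.2
        ⟨(v, w), Finset.mem_product.2 ⟨hv, hw⟩, ?_⟩))
      show (w.1 - v.1) / (v.2 - w.2) = t
      rw [div_eq_iff (sub_ne_zero.2 h2)]
      linarith
  set mm : Set (ℝ × ℝ) → ℝ := fun ℓ => (-t * B ℓ - A ℓ) / (B ℓ - t * A ℓ) with hmm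
  set pt : Set (ℝ × ℝ) → ℝ × ℝ := fun ℓ =>
    (A ℓ * C ℓ / (A ℓ ^ 2 + B ℓ ^ 2), B ℓ * C ℓ / (A ℓ ^ 2 + B ℓ ^ 2)) with hpt
  set kk : Set (ℝ × ℝ) → ℝ := fun ℓ => Yc t (pt ℓ) - mm ℓ * Xc t (pt ℓ) with hkk
  have hAB2 : ∀ ℓ ∈ L, A ℓ ^ 2 + B ℓ ^ 2 ≠ 0 := by
    intro ℓ hℓ he
    have hA : A ℓ = 0 := by nlinarith [sq_nonneg (A ℓ), sq_nonneg (B ℓ)]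
    have hB : B ℓ = 0 := by nlinarith [sq_nonneg (A ℓ), sq_nonneg (B ℓ)]
    exact hnz ℓ hℓ (by rw [hA, hB])
  have memline : ∀ ℓ ∈ L, ∀ p : ℝ × ℝ, p ∈ ℓ ↔ Yc t p = mm ℓ * Xc t p + kk ℓ := by
    intro ℓ hℓ p
    have hD := htL ℓ hℓ
    have hDm : (B ℓ - t * A ℓ) * mm ℓ = -t * B ℓ - A ℓ := by
      simp only [hmm]
      field_simp
    have hpt1 : A ℓ * (pt ℓ).1 + B ℓ * (pt ℓ).2 = C ℓ := by
      simp only [hpt]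
      field_simp [hAB2 ℓ hℓ]
    have key : (B ℓ - t * A ℓ) * (Yc t p - mm ℓ * Xc t p - kk ℓ)
        = (1 + t ^ 2) * (A ℓ * p.1 + B ℓ * p.2 - C ℓ) := by
      simp only [hkk, Xc, Yc]
      linear_combination (((pt ℓ).1 + t * (pt ℓ).2) - (p.1 + t * p.2)) * hDm
        - (1 + t ^ 2) * hpt1
    constructor
    · intro hp
      have hE : A ℓ * p.1 + B ℓ * p.2 = C ℓ := by
        rw [heq ℓ hℓ] at hp
        exact hp
      have h0 : (B ℓ - t * A ℓ) * (Yc t p - mm ℓ * Xc t p - kk ℓ) = 0 := by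
        rw [key]
        linear_combination (1 + t ^ 2) * hE
      rcases mul_eq_zero.1 h0 with h1 | h1
      · exact absurd h1 hD
      · linarith
    · intro hY
      have h0 : (B ℓ - t * A ℓ) * (Yc t p - mm ℓ * Xc t p - kk ℓ) = 0 := by
        rw [hY]
        ring
      rw [key] at h0
      rcases mul_eq_zero.1 h0 with h1 | h1
      · exact absurd h1 (one_add_sq_ne t)
      · rw [heq ℓ hℓ]
        show A ℓ * p.1 + B ℓ * p.2 = C ℓ
        linarith
  set FF : Finset (ℝ × ℝ) := L.image (fun ℓ => (mm ℓ, kk ℓ)) with hFF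
  set colF : ℝ × ℝ → Fin 3 :=
    fun f => color {p : ℝ × ℝ | Yc t p = f.1 * Xc t p + f.2} with hcolF
  have hsetline : ∀ ℓ ∈ L, {p : ℝ × ℝ | Yc t p = mm ℓ * Xc t p + kk ℓ} = ℓ := by
    intro ℓ hℓ
    ext p
    rw [Set.mem_setOf_eq, ← memline ℓ hℓ p]
  have hcolFl : ∀ ℓ ∈ L, colF (mm ℓ, kk ℓ) = color ℓ := by
    intro ℓ hℓ
    show color {p : ℝ × ℝ | Yc t p = mm ℓ * Xc t p + kk ℓ} = color ℓ
    rw [hsetline ℓ hℓ]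
  have hinj : ∀ ℓ ∈ L, ∀ ℓ' ∈ L, (mm ℓ, kk ℓ) = (mm ℓ', kk ℓ') → ℓ = ℓ' := by
    intro ℓ hℓ ℓ' hℓ' he
    obtain ⟨e1, e2⟩ := Prod.mk.injEq _ _ _ _ ▸ he
    rw [← hsetline ℓ hℓ, ← hsetline ℓ' hℓ', e1, e2]
  have Hslope : ∀ f ∈ FF, ∀ g ∈ FF, f ≠ g → f.1 ≠ g.1 := by
    intro f hf g hg hfg
    obtain ⟨ℓ, hℓ, rfl⟩ := Finset.mem_image.1 hf
    obtain ⟨ℓ', hℓ', rfl⟩ := Finset.mem_image.1 hg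
    have hll : ℓ ≠ ℓ' := fun e => hfg (by rw [e])
    intro he
    change mm ℓ = mm ℓ' at he
    have hw := hV ℓ hℓ ℓ' hℓ' hll
    have h1 : Yc t (V ℓ ℓ') = mm ℓ * Xc t (V ℓ ℓ') + kk ℓ :=
      (memline ℓ hℓ _).1 hw.1
    have h2 : Yc t (V ℓ ℓ') = mm ℓ' * Xc t (V ℓ ℓ') + kk ℓ' :=
      (memline ℓ' hℓ' _).1 hw.2
    rw [he] at h1
    have hkke : kk ℓ = kk ℓ' := by linarith
    exact hfg (by rw [he, hkke])
  have hrhoX : ∀ ℓ ∈ L, ∀ ℓ' ∈ L, ℓ ≠ ℓ' →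
      rho (mm ℓ, kk ℓ) (mm ℓ', kk ℓ') = Xc t (V ℓ ℓ') := by
    intro ℓ hℓ ℓ' hℓ' hll
    have hfg : ((mm ℓ, kk ℓ) : ℝ × ℝ) ≠ (mm ℓ', kk ℓ') :=
      fun e => hll (hinj ℓ hℓ ℓ' hℓ' e)
    have hs : ((mm ℓ, kk ℓ) : ℝ × ℝ).1 ≠ ((mm ℓ', kk ℓ') : ℝ × ℝ).1 :=
      Hslope _ (Finset.mem_image_of_mem _ hℓ) _ (Finset.mem_image_of_mem _ hℓ') hfg
    have hw := hV ℓ hℓ ℓ' hℓ' hll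
    have h1 := (memline ℓ hℓ _).1 hw.1
    have h2 := (memline ℓ' hℓ' _).1 hw.2
    have hve : val (mm ℓ, kk ℓ) (Xc t (V ℓ ℓ')) = val (mm ℓ', kk ℓ') (Xc t (V ℓ ℓ')) := by
      unfold val
      simp only
      linarith
    exact ((val_eq_iff hs).1 hve).symm
  have Hgen : ∀ f ∈ FF, ∀ g ∈ FF, ∀ f' ∈ FF, ∀ g' ∈ FF, f ≠ g → f' ≠ g' →
      rho f g = rho f' g' → ({f, g} : Set (ℝ × ℝ)) = {f', g'} := by
    intro f hf g hg f' hf' g' hg' hfg hfg' hr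
    obtain ⟨ℓ1, h1, rfl⟩ := Finset.mem_image.1 hf
    obtain ⟨ℓ2, h2, rfl⟩ := Finset.mem_image.1 hg
    obtain ⟨ℓ3, h3, rfl⟩ := Finset.mem_image.1 hf'
    obtain ⟨ℓ4, h4, rfl⟩ := Finset.mem_image.1 hg'
    have h12 : ℓ1 ≠ ℓ2 := fun e => hfg (by rw [e])
    have h34 : ℓ3 ≠ ℓ4 := fun e => hfg' (by rw [e])
    rw [hrhoX ℓ1 h1 ℓ2 h2 h12, hrhoX ℓ3 h3 ℓ4 h4 h34] at hr
    have hVm12 : V ℓ1 ℓ2 ∈ VS := Finset.mem_image.2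
      ⟨(ℓ1, ℓ2), Finset.mem_filter.2 ⟨Finset.mem_product.2 ⟨h1, h2⟩, h12⟩, rfl⟩
    have hVm34 : V ℓ3 ℓ4 ∈ VS := Finset.mem_image.2
      ⟨(ℓ3, ℓ4), Finset.mem_filter.2 ⟨Finset.mem_product.2 ⟨h3, h4⟩, h34⟩, rfl⟩
    have hVeq : V ℓ1 ℓ2 = V ℓ3 ℓ4 := by
      by_contra hne
      exact htV _ hVm12 _ hVm34 hne hr
    have hw12 := hV ℓ1 h1 ℓ2 h2 h12
    have hw34 := hV ℓ3 h3 ℓ4 h4 h34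
    rw [← hVeq] at hw34
    have e3 : ℓ3 = ℓ1 ∨ ℓ3 = ℓ2 := by
      by_contra hcon
      push_neg at hcon
      rcases hsimple (V ℓ1 ℓ2) ℓ1 h1 ℓ2 h2 ℓ3 h3 hw12.1 hw12.2 hw34.1 with e | e | e
      · exact h12 e
      · exact hcon.1 e.symm
      · exact hcon.2 e.symm
    have e4 : ℓ4 = ℓ1 ∨ ℓ4 = ℓ2 := by
      by_contra hcon
      push_neg at hcon
      rcases hsimple (V ℓ1 ℓ2) ℓ1 h1 ℓ2 h2 ℓ4 h4 hw12.1 hw12.2 hw34.2 with e | e | e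
      · exact h12 e
      · exact hcon.1 e.symm
      · exact hcon.2 e.symm
    rcases e3 with e3 | e3 <;> rcases e4 with e4 | e4
    · exact absurd (e3.trans e4.symm) h34
    · rw [e3, e4]
    · rw [e3, e4]
      exact Set.pair_comm _ _
    · exact absurd (e3.trans e4.symm) h34
  obtain ⟨ℓr0, hℓr0, hcℓr0⟩ := hcolors 0
  obtain ⟨ℓr1, hℓr1, hcℓr1⟩ := hcolors 1
  obtain ⟨ℓr2, hℓr2, hcℓr2⟩ := hcolors 2
  have dL01 : ℓr0 ≠ ℓr1 := fun e => by
    rw [e, hcℓr1] at hcℓr0; exact absurd hcℓr0 (by decide)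
  have dL02 : ℓr0 ≠ ℓr2 := fun e => by
    rw [e, hcℓr2] at hcℓr0; exact absurd hcℓr0 (by decide)
  have dL12 : ℓr1 ≠ ℓr2 := fun e => by
    rw [e, hcℓr2] at hcℓr1; exact absurd hcℓr1 (by decide)
  have hLcard : 3 ≤ L.card := by
    have hsub : ({ℓr0, ℓr1, ℓr2} : Finset (Set (ℝ × ℝ))) ⊆ L := by
      intro u hu
      rcases Finset.mem_insert.1 hu with e | hu2
      · exact e ▸ hℓr0
      rcases Finset.mem_insert.1 hu2 with e | hu3
      · exact e ▸ hℓr1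
      · exact (Finset.mem_singleton.1 hu3) ▸ hℓr2
    have h3 : ({ℓr0, ℓr1, ℓr2} : Finset (Set (ℝ × ℝ))).card = 3 :=
      Finset.card_eq_three.2 ⟨ℓr0, ℓr1, ℓr2, dL01, dL02, dL12, rfl⟩
    rw [← h3]
    exact Finset.card_le_card hsub
  have hFcard : 3 ≤ FF.card := by
    rw [hFF, Finset.card_image_of_injOn (fun u hu v hv e => hinj u hu v hv e)]
    exact hLcard
  have HcolF : ∀ i : Fin 3, ∃ f ∈ FF, colF f = i := by
    intro i
    fin_cases i
    · exact ⟨(mm ℓr0, kk ℓr0), Finset.mem_image_of_mem _ hℓr0,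
        (hcolFl ℓr0 hℓr0).trans hcℓr0⟩
    · exact ⟨(mm ℓr1, kk ℓr1), Finset.mem_image_of_mem _ hℓr1,
        (hcolFl ℓr1 hℓr1).trans hcℓr1⟩
    · exact ⟨(mm ℓr2, kk ℓr2), Finset.mem_image_of_mem _ hℓr2,
        (hcolFl ℓr2 hℓr2).trans hcℓr2⟩
  obtain ⟨x, hW⟩ := core FF.card FF colF rfl hFcard Hslope Hgen HcolF
  obtain ⟨hCF, f₁, hf₁, f₂, hf₂, f₃, hf₃, c12, c13, c23, o12, o23, hout⟩ := hW
  obtain ⟨ylo, hylo1, hylo2⟩ : ∃ ylo, ylo < val f₁ x ∧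
      ∀ g ∈ FF, val g x < val f₁ x → val g x < ylo := by
    by_cases hS : ((FF.filter (fun g => val g x < val f₁ x)).Nonempty)
    · obtain ⟨u, hu, hmax⟩ := (FF.filter (fun g => val g x < val f₁ x)).exists_max_image
        (fun g => val g x) hS
      have hu2 := Finset.mem_filter.1 hu
      refine ⟨(val u x + val f₁ x) / 2, by linarith [hu2.2], ?_⟩
      intro g hg hlt
      have := hmax g (Finset.mem_filter.2 ⟨hg, hlt⟩)
      linarith [hu2.2]
    · exact ⟨val f₁ x - 1, by linarith, fun g hg hlt =>
        absurd ⟨g, Finset.mem_filter.2 ⟨hg, hlt⟩⟩ hS⟩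
  obtain ⟨yhi, hyhi1, hyhi2⟩ : ∃ yhi, val f₃ x < yhi ∧
      ∀ g ∈ FF, val f₃ x < val g x → yhi < val g x := by
    by_cases hS : ((FF.filter (fun g => val f₃ x < val g x)).Nonempty)
    · obtain ⟨u, hu, hmin⟩ := (FF.filter (fun g => val f₃ x < val g x)).exists_min_image
        (fun g => val g x) hS
      have hu2 := Finset.mem_filter.1 hu
      refine ⟨(val f₃ x + val u x) / 2, by linarith [hu2.2], ?_⟩
      intro g hg hlt
      have := hmin g (Finset.mem_filter.2 ⟨hg, hlt⟩)
      linarith [hu2.2]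
    · exact ⟨val f₃ x + 1, by linarith, fun g hg hlt =>
        absurd ⟨g, Finset.mem_filter.2 ⟨hg, hlt⟩⟩ hS⟩
  have hlohi : ylo < yhi := by linarith
  have hcross : ∀ ℓ ∈ L, ((segment ℝ (invC t x ylo) (invC t x yhi) ∩ ℓ).Nonempty ↔
      (ylo ≤ val (mm ℓ, kk ℓ) x ∧ val (mm ℓ, kk ℓ) x ≤ yhi)) := by
    intro ℓ hℓ
    constructor
    · rintro ⟨z, hzseg, hzl⟩
      obtain ⟨hzX, hzl', hzr'⟩ := segment_char hzseg
      rw [min_eq_left hlohi.le] at hzl'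
      rw [max_eq_right hlohi.le] at hzr'
      have hY : Yc t z = mm ℓ * Xc t z + kk ℓ := (memline ℓ hℓ z).1 hzl
      rw [hzX] at hY
      have hv : val (mm ℓ, kk ℓ) x = Yc t z := by
        unfold val
        simp only
        linarith
      rw [hv]
      exact ⟨hzl', hzr'⟩
    · rintro ⟨hl, hr⟩
      refine ⟨invC t x (val (mm ℓ, kk ℓ) x), mem_segment_invC hl hr hlohi, ?_⟩
      rw [memline ℓ hℓ, Xc_invC, Yc_invC]
      rfl
  have hmemF : ∀ f ∈ FF, ∃ ℓ ∈ L, (mm ℓ, kk ℓ) = f := by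
    intro f hf
    obtain ⟨ℓ, hℓ, he⟩ := Finset.mem_image.1 hf
    exact ⟨ℓ, hℓ, he⟩
  obtain ⟨ℓa, hℓa, hfa⟩ := hmemF f₁ hf₁
  obtain ⟨ℓb, hℓb, hfb⟩ := hmemF f₂ hf₂
  obtain ⟨ℓc, hℓc, hfc⟩ := hmemF f₃ hf₃
  have hvala : ylo ≤ val f₁ x ∧ val f₁ x ≤ yhi := ⟨hylo1.le, by linarith⟩
  have hvalb : ylo ≤ val f₂ x ∧ val f₂ x ≤ yhi := ⟨by linarith, by linarith⟩
  have hvalc : ylo ≤ val f₃ x ∧ val f₃ x ≤ yhi := ⟨by linarith, hyhi1.le⟩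
  have hcola : color ℓa = colF f₁ := by rw [← hfa]; exact (hcolFl ℓa hℓa).symm ▸ rfl
  have hcolb : color ℓb = colF f₂ := by rw [← hfb]; exact (hcolFl ℓb hℓb).symm ▸ rfl
  have hcolc : color ℓc = colF f₃ := by rw [← hfc]; exact (hcolFl ℓc hℓc).symm ▸ rfl
  have huniq : ∀ ℓ' ∈ L, (segment ℝ (invC t x ylo) (invC t x yhi) ∩ ℓ').Nonempty →
      (mm ℓ', kk ℓ') = f₁ ∨ (mm ℓ', kk ℓ') = f₂ ∨ (mm ℓ', kk ℓ') = f₃ := by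
    intro ℓ' hℓ' hne
    by_contra hcon
    push_neg at hcon
    obtain ⟨hn1, hn2, hn3⟩ := hcon
    have hgF : ((mm ℓ', kk ℓ') : ℝ × ℝ) ∈ FF := Finset.mem_image_of_mem _ hℓ'
    obtain ⟨hl, hr⟩ := (hcross ℓ' hℓ').1 hne
    rcases hout _ hgF hn1 hn2 hn3 with hlt | hlt
    · have := hylo2 _ hgF hlt
      linarith
    · have := hyhi2 _ hgF hlt
      linarith
  refine ⟨invC t x ylo, invC t x yhi, ?_⟩
  intro i
  rcases fin3_cases (colF f₁) (colF f₂) (colF f₃) i c12 c13 c23 with hi | hi | hi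
  · refine ⟨ℓa, ⟨hℓa, hcola.trans hi.symm, (hcross ℓa hℓa).2 (hfa ▸ hvala)⟩, ?_⟩
    rintro ℓ' ⟨hℓ', hcol', hne⟩
    have hc' : colF (mm ℓ', kk ℓ') = i := (hcolFl ℓ' hℓ').trans hcol'
    have he1 : (mm ℓ', kk ℓ') = f₁ := by
      rcases huniq ℓ' hℓ' hne with e | e | e
      · exact e
      · rw [e] at hc'
        exact absurd (hi.symm.trans hc'.symm) c12
      · rw [e] at hc'
        exact absurd (hi.symm.trans hc'.symm) c13
    exact hinj ℓ' hℓ' ℓa hℓa (he1.trans hfa.symm)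
  · refine ⟨ℓb, ⟨hℓb, hcolb.trans hi.symm, (hcross ℓb hℓb).2 (hfb ▸ hvalb)⟩, ?_⟩
    rintro ℓ' ⟨hℓ', hcol', hne⟩
    have hc' : colF (mm ℓ', kk ℓ') = i := (hcolFl ℓ' hℓ').trans hcol'
    have he1 : (mm ℓ', kk ℓ') = f₂ := by
      rcases huniq ℓ' hℓ' hne with e | e | e
      · rw [e] at hc'
        exact absurd (hc'.trans hi) c12
      · exact e
      · rw [e] at hc'
        exact absurd (hi.symm.trans hc'.symm) c23
    exact hinj ℓ' hℓ' ℓb hℓb (he1.trans hfb.symm)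
  · refine ⟨ℓc, ⟨hℓc, hcolc.trans hi.symm, (hcross ℓc hℓc).2 (hfc ▸ hvalc)⟩, ?_⟩
    rintro ℓ' ⟨hℓ', hcol', hne⟩
    have hc' : colF (mm ℓ', kk ℓ') = i := (hcolFl ℓ' hℓ').trans hcol'
    have he1 : (mm ℓ', kk ℓ') = f₃ := by
      rcases huniq ℓ' hℓ' hne with e | e | e
      · rw [e] at hc'
        exact absurd (hc'.trans hi) c13
      · rw [e] at hc'
        exact absurd (hc'.trans hi) c23
      · exact e
    exact hinj ℓ' hℓ' ℓc hℓc (he1.trans hfc.symm)
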